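/- (Consistency comparison inequality) Let (Ω, μ) be a probability space, n ≥ 1, and let x, x̂, x̃ : Ω → ℝⁿ be square-integrable measurable functions. Let S̃ and Ŝ be real symmetric positive definite n×n matrices, let m > 0 be the smallest eigenvalue of S̃, and suppose the true filter is consistent: C(x, x̂, Ŝ) = 1. Then |C(x, x̂, Ŝ) − C(x, x̂, S̃)| ≤ |1 − C(x, x̃, S̃)| + (1/(n*m))∫ ‖x̂ − x̃‖² dμ + (2/(n*m)) * (∫ ‖x − x̂‖² dμ)^{1/2} * (∫ ‖x̂ − x̃‖² dμ)^{1/2}, where ‖·‖ denotes the Euclidean norm on ℝⁿ. In particular, a consistent filter (C(x, x̃, S̃) = 1) whose mean estimate x̃ is close to the true posterior mean x̂ in mean square has C(x, x̂, S̃) close to C(x, x̂, Ŝ) = 1. -/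

import Mathlib

open MeasureTheory

/-- The consistency measure `C(x, y, S) = (1/n) ∫ (x − y)ᵀ S⁻¹ (x − y) dμ`. -/
noncomputable def consist {Ω : Type*} [MeasurableSpace Ω] (μ : Measure Ω) (n : ℕ)
    (x y : Ω → Fin n → ℝ) (S : Matrix (Fin n) (Fin n) ℝ) : ℝ :=
  (1 / (n : ℝ)) *
    ∫ ω, dotProduct (fun i => x ω i - y ω i)
      (S⁻¹.mulVec fun i => x ω i - y ω i) ∂μ

open Matrix in
lemma quad_lower {N : ℕ} {A : Matrix (Fin N) (Fin N) ℝ} (hA : A.IsHermitian) {m : ℝ}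
    (hml : ∀ i, m ≤ hA.eigenvalues i) (v : Fin N → ℝ) :
    m * (v ⬝ᵥ v) ≤ v ⬝ᵥ A *ᵥ v := by
  set U : Matrix (Fin N) (Fin N) ℝ := (hA.eigenvectorUnitary : Matrix (Fin N) (Fin N) ℝ)
    with hUdef
  have hU2 : U * star U = 1 := Matrix.mem_unitaryGroup_iff.mp hA.eigenvectorUnitary.2
  set w : Fin N → ℝ := star U *ᵥ v with hwdef
  have hvU : v ᵥ* U = w := by
    rw [hwdef, Matrix.star_eq_conjTranspose, Matrix.conjTranspose_eq_transpose_of_trivial,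
      Matrix.mulVec_transpose]
  have hvv : v ⬝ᵥ v = w ⬝ᵥ w := by
    calc v ⬝ᵥ v = v ⬝ᵥ (U * star U) *ᵥ v := by rw [hU2, Matrix.one_mulVec]
    _ = v ⬝ᵥ U *ᵥ (star U *ᵥ v) := by rw [← Matrix.mulVec_mulVec]
    _ = (v ᵥ* U) ⬝ᵥ w := by rw [Matrix.dotProduct_mulVec]
    _ = w ⬝ᵥ w := by rw [hvU]
  have hq : v ⬝ᵥ A *ᵥ v = ∑ i, hA.eigenvalues i * w i ^ 2 := by
    conv_lhs => rw [hA.spectral_theorem, Unitary.conjStarAlgAut_apply]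
    rw [← hUdef, mul_assoc, ← Matrix.mulVec_mulVec, Matrix.dotProduct_mulVec, hvU,
      ← Matrix.mulVec_mulVec]
    simp [Matrix.mulVec_diagonal, dotProduct, mul_comm, sq, mul_assoc,
      RCLike.ofReal_real_eq_id]
    refine Finset.sum_congr rfl fun i _ => by ring
  rw [hq, hvv]
  have : w ⬝ᵥ w = ∑ i, w i ^ 2 := by simp [dotProduct, sq]
  rw [this, Finset.mul_sum]
  exact Finset.sum_le_sum fun i _ => mul_le_mul_of_nonneg_right (hml i) (sq_nonneg _)

open Matrix in
lemma inv_norm_sq_le {N : ℕ} {A : Matrix (Fin N) (Fin N) ℝ} (hA : A.PosDef)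
    {m : ℝ} (hm : 0 < m) (hml : ∀ i, m ≤ hA.1.eigenvalues i) (v : Fin N → ℝ) :
    m * ((A⁻¹ *ᵥ v) ⬝ᵥ (A⁻¹ *ᵥ v)) ≤ v ⬝ᵥ A⁻¹ *ᵥ v := by
  have hinv : A * A⁻¹ = 1 := Matrix.mul_nonsing_inv A (isUnit_iff_ne_zero.mpr hA.det_pos.ne')
  set u : Fin N → ℝ := A⁻¹ *ᵥ v with hudef
  have h1 := quad_lower hA.1 hml u
  have h2 : A *ᵥ u = v := by rw [hudef, Matrix.mulVec_mulVec, hinv, Matrix.one_mulVec]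
  have h3 : u ⬝ᵥ A *ᵥ u = v ⬝ᵥ A⁻¹ *ᵥ v := by rw [h2, dotProduct_comm]
  linarith

open Matrix in
lemma inv_quad_le {N : ℕ} {A : Matrix (Fin N) (Fin N) ℝ} (hA : A.PosDef)
    {m : ℝ} (hm : 0 < m) (hml : ∀ i, m ≤ hA.1.eigenvalues i) (v : Fin N → ℝ) :
    v ⬝ᵥ A⁻¹ *ᵥ v ≤ m⁻¹ * ∑ i, v i ^ 2 := by
  set u : Fin N → ℝ := A⁻¹ *ᵥ v with hudef
  have key : m * (u ⬝ᵥ u) ≤ v ⬝ᵥ A⁻¹ *ᵥ v := inv_norm_sq_le hA hm hml v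
  set q : ℝ := v ⬝ᵥ A⁻¹ *ᵥ v with hqdef
  have hq0 : 0 ≤ q := by
    have := (hA.inv.posSemidef).dotProduct_mulVec_nonneg v
    simpa using this
  have hcs : q ^ 2 ≤ (∑ i, v i ^ 2) * (∑ i, u i ^ 2) := by
    have := Finset.sum_mul_sq_le_sq_mul_sq Finset.univ v u
    have hq : q = ∑ i, v i * u i := rfl
    rw [hq]; exact this
  have huu : u ⬝ᵥ u = ∑ i, u i ^ 2 := by simp [dotProduct, sq]
  have hv0 : 0 ≤ ∑ i, v i ^ 2 := Finset.sum_nonneg fun i _ => sq_nonneg _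
  rcases eq_or_lt_of_le hq0 with h | h
  · rw [← h]; positivity
  · rw [huu] at key
    have h4 : q ^ 2 ≤ (∑ i, v i ^ 2) * (q / m) := by
      refine hcs.trans (mul_le_mul_of_nonneg_left ?_ hv0)
      rw [le_div_iff₀ hm]; linarith
    rw [le_inv_mul_iff₀ hm] at *
    nlinarith

open Matrix in
lemma inv_bil_le {N : ℕ} {A : Matrix (Fin N) (Fin N) ℝ} (hA : A.PosDef)
    {m : ℝ} (hm : 0 < m) (hml : ∀ i, m ≤ hA.1.eigenvalues i) (u v : Fin N → ℝ) :
    |u ⬝ᵥ A⁻¹ *ᵥ v| ≤ m⁻¹ * Real.sqrt (∑ i, u i ^ 2) * Real.sqrt (∑ i, v i ^ 2) := by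
  set w : Fin N → ℝ := A⁻¹ *ᵥ v with hwdef
  set z : ℝ := u ⬝ᵥ w with hzdef
  have hcs : z ^ 2 ≤ (∑ i, u i ^ 2) * (∑ i, w i ^ 2) :=
    Finset.sum_mul_sq_le_sq_mul_sq Finset.univ u w
  have hww : (∑ i, w i ^ 2) ≤ m⁻¹ * (m⁻¹ * ∑ i, v i ^ 2) := by
    have h1 := inv_norm_sq_le hA hm hml v
    have h2 := inv_quad_le hA hm hml v
    have huu : w ⬝ᵥ w = ∑ i, w i ^ 2 := by simp [dotProduct, sq]
    rw [huu] at h1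
    rw [← le_inv_mul_iff₀ hm] at h1
    exact h1.trans (mul_le_mul_of_nonneg_left h2 (inv_nonneg.mpr hm.le))
  have hu0 : 0 ≤ ∑ i, u i ^ 2 := Finset.sum_nonneg fun i _ => sq_nonneg _
  have hv0 : 0 ≤ ∑ i, v i ^ 2 := Finset.sum_nonneg fun i _ => sq_nonneg _
  have hz2 : z ^ 2 ≤ (m⁻¹ * Real.sqrt (∑ i, u i ^ 2) * Real.sqrt (∑ i, v i ^ 2)) ^ 2 := by
    have : (m⁻¹ * Real.sqrt (∑ i, u i ^ 2) * Real.sqrt (∑ i, v i ^ 2)) ^ 2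
        = m⁻¹ ^ 2 * ((∑ i, u i ^ 2) * (∑ i, v i ^ 2)) := by
      rw [mul_pow, mul_pow, Real.sq_sqrt hu0, Real.sq_sqrt hv0]; ring
    rw [this]
    calc z ^ 2 ≤ (∑ i, u i ^ 2) * (∑ i, w i ^ 2) := hcs
    _ ≤ (∑ i, u i ^ 2) * (m⁻¹ * (m⁻¹ * ∑ i, v i ^ 2)) :=
        mul_le_mul_of_nonneg_left hww hu0
    _ = m⁻¹ ^ 2 * ((∑ i, u i ^ 2) * (∑ i, v i ^ 2)) := by ring
  have hR0 : 0 ≤ m⁻¹ * Real.sqrt (∑ i, u i ^ 2) * Real.sqrt (∑ i, v i ^ 2) := by positivity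
  calc |z| = Real.sqrt (z ^ 2) := (Real.sqrt_sq_eq_abs z).symm
  _ ≤ Real.sqrt ((m⁻¹ * Real.sqrt (∑ i, u i ^ 2) * Real.sqrt (∑ i, v i ^ 2)) ^ 2) :=
      Real.sqrt_le_sqrt hz2
  _ = _ := Real.sqrt_sq hR0

open Matrix in
lemma symm_swap {N : ℕ} {B : Matrix (Fin N) (Fin N) ℝ} (hB : Bᵀ = B) (p q : Fin N → ℝ) :
    q ⬝ᵥ B *ᵥ p = p ⬝ᵥ B *ᵥ q := by
  rw [Matrix.dotProduct_mulVec, ← Matrix.mulVec_transpose, hB, dotProduct_comm]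

lemma comp_memℒp {Ω : Type*} [MeasurableSpace Ω] {μ : Measure Ω} {n : ℕ}
    {f : Ω → Fin n → ℝ} (hf : Measurable f) (h2 : MemLp f 2 μ) (i : Fin n) :
    MemLp (fun ω => f ω i) 2 μ :=
  h2.of_le ((measurable_pi_apply i).comp hf).aestronglyMeasurable
    (ae_of_all _ fun ω => norm_le_pi_norm (f ω) i)

lemma mul_int {Ω : Type*} [MeasurableSpace Ω] {μ : Measure Ω} {u v : Ω → ℝ}
    (hu : MemLp u 2 μ) (hv : MemLp v 2 μ) :
    Integrable (fun ω => u ω * v ω) μ := by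
  have h := hv.smul (φ := u) hu
    (p := 2) (q := 2) (r := 1)
  rw [memLp_one_iff_integrable] at h
  exact h

/-- consistency comparison inequality. -/
theorem stmt17 {Ω : Type*} [MeasurableSpace Ω] (μ : Measure Ω) [IsProbabilityMeasure μ]
    (n : ℕ) (hn : 1 ≤ n) (x xhat xtil : Ω → Fin n → ℝ)
    (hxm : Measurable x) (hxhatm : Measurable xhat) (hxtilm : Measurable xtil)
    (hx2 : MemLp x 2 μ) (hxhat2 : MemLp xhat 2 μ) (hxtil2 : MemLp xtil 2 μ)
    (Stil Shat : Matrix (Fin n) (Fin n) ℝ)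
    (hStilsymm : Stil.IsSymm) (hShatsymm : Shat.IsSymm)
    (hStilpd : Stil.PosDef) (hShatpd : Shat.PosDef)
    (m : ℝ) (hm : 0 < m)
    (hmleast : IsLeast (Set.range hStilpd.1.eigenvalues) m)
    (hcons : consist μ n x xhat Shat = 1) :
    |consist μ n x xhat Shat - consist μ n x xhat Stil| ≤
      |1 - consist μ n x xtil Stil|
        + (1 / ((n : ℝ) * m)) * ∫ ω, ∑ i, (xhat ω i - xtil ω i) ^ 2 ∂μ
        + (2 / ((n : ℝ) * m)) *
            Real.sqrt (∫ ω, ∑ i, (x ω i - xhat ω i) ^ 2 ∂μ) *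
            Real.sqrt (∫ ω, ∑ i, (xhat ω i - xtil ω i) ^ 2 ∂μ) := by
  classical
  have hml : ∀ i, m ≤ hStilpd.1.eigenvalues i := fun i => hmleast.2 ⟨i, rfl⟩
  set B : Matrix (Fin n) (Fin n) ℝ := Stil⁻¹ with hBdef
  have hBsym : Matrix.transpose B = B := by
    rw [hBdef, Matrix.transpose_nonsing_inv, hStilsymm.eq]
  -- component MemLp
  have hai : ∀ i, MemLp (fun ω => x ω i - xhat ω i) 2 μ := fun i =>
    (comp_memℒp hxm hx2 i).sub (comp_memℒp hxhatm hxhat2 i)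
  have hbi : ∀ i, MemLp (fun ω => xhat ω i - xtil ω i) 2 μ := fun i =>
    (comp_memℒp hxhatm hxhat2 i).sub (comp_memℒp hxtilm hxtil2 i)
  -- integrability of bilinear forms
  have hint : ∀ (u v : Ω → Fin n → ℝ), (∀ i, MemLp (fun ω => u ω i) 2 μ) →
      (∀ i, MemLp (fun ω => v ω i) 2 μ) →
      Integrable (fun ω => dotProduct (u ω) (B.mulVec (v ω))) μ := by
    intro u v hu hv
    have heq : (fun ω => dotProduct (u ω) (B.mulVec (v ω)))
        = fun ω => ∑ i, ∑ j, B i j * (u ω i * v ω j) := by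
      funext ω
      simp only [dotProduct, Matrix.mulVec, Finset.mul_sum]
      exact Finset.sum_congr rfl fun i _ => Finset.sum_congr rfl fun j _ => by ring
    rw [heq]
    exact integrable_finset_sum _ fun i _ => integrable_finset_sum _ fun j _ =>
      (mul_int (hu i) (hv j)).const_mul _
  have Iaa : Integrable (fun ω => dotProduct (fun i => x ω i - xhat ω i)
      (B.mulVec (fun i => x ω i - xhat ω i))) μ := hint _ _ hai hai
  have Iab : Integrable (fun ω => dotProduct (fun i => x ω i - xhat ω i)
      (B.mulVec (fun i => xhat ω i - xtil ω i))) μ := hint _ _ hai hbi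
  have Ibb : Integrable (fun ω => dotProduct (fun i => xhat ω i - xtil ω i)
      (B.mulVec (fun i => xhat ω i - xtil ω i))) μ := hint _ _ hbi hbi
  -- integrability of squared norms
  have Ja : Integrable (fun ω => ∑ i, (x ω i - xhat ω i) ^ 2) μ :=
    integrable_finset_sum _ fun i _ =>
      (memLp_two_iff_integrable_sq (hai i).1).mp (hai i)
  have Jb : Integrable (fun ω => ∑ i, (xhat ω i - xtil ω i) ^ 2) μ :=
    integrable_finset_sum _ fun i _ =>
      (memLp_two_iff_integrable_sq (hbi i).1).mp (hbi i)
  -- pointwise bilinear expansion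
  have hpt : ∀ ω, dotProduct (fun i => x ω i - xtil ω i)
        (B.mulVec fun i => x ω i - xtil ω i)
      = dotProduct (fun i => x ω i - xhat ω i) (B.mulVec fun i => x ω i - xhat ω i)
        + 2 * dotProduct (fun i => x ω i - xhat ω i)
            (B.mulVec fun i => xhat ω i - xtil ω i)
        + dotProduct (fun i => xhat ω i - xtil ω i)
            (B.mulVec fun i => xhat ω i - xtil ω i) := by
    intro ω
    have h1 : (fun i => x ω i - xtil ω i)
        = (fun i => x ω i - xhat ω i) + (fun i => xhat ω i - xtil ω i) := by
      funext i; simp only [Pi.add_apply]; ring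
    have hsw := symm_swap hBsym (fun i => x ω i - xhat ω i) (fun i => xhat ω i - xtil ω i)
    rw [h1, Matrix.mulVec_add, dotProduct_add, add_dotProduct,
      add_dotProduct, hsw]
    ring
  -- split of the tilde consistency
  have hCtil : consist μ n x xtil Stil
      = (1/(n:ℝ)) * ((∫ ω, dotProduct (fun i => x ω i - xhat ω i)
            (B.mulVec fun i => x ω i - xhat ω i) ∂μ)
          + 2 * (∫ ω, dotProduct (fun i => x ω i - xhat ω i)
            (B.mulVec fun i => xhat ω i - xtil ω i) ∂μ)
          + (∫ ω, dotProduct (fun i => xhat ω i - xtil ω i)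
            (B.mulVec fun i => xhat ω i - xtil ω i) ∂μ)) := by
    have h0 : consist μ n x xtil Stil = (1/(n:ℝ)) * ∫ ω, dotProduct
        (fun i => x ω i - xtil ω i) (B.mulVec fun i => x ω i - xtil ω i) ∂μ := rfl
    rw [h0]
    congr 1
    have I2 : Integrable (fun ω => dotProduct (fun i => x ω i - xhat ω i)
          (B.mulVec fun i => x ω i - xhat ω i)
        + 2 * dotProduct (fun i => x ω i - xhat ω i)
          (B.mulVec fun i => xhat ω i - xtil ω i)) μ := Iaa.add (Iab.const_mul 2)
    have I3 : Integrable (fun ω => 2 * dotProduct (fun i => x ω i - xhat ω i)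
          (B.mulVec fun i => xhat ω i - xtil ω i)) μ := Iab.const_mul 2
    rw [integral_congr_ae (ae_of_all _ hpt), integral_add I2 Ibb, integral_add Iaa I3,
      integral_const_mul]
  -- nonnegativity / bounds
  have hIbb0 : 0 ≤ ∫ ω, dotProduct (fun i => xhat ω i - xtil ω i)
      (B.mulVec fun i => xhat ω i - xtil ω i) ∂μ :=
    integral_nonneg fun ω => by
      simpa using (hStilpd.inv.posSemidef).dotProduct_mulVec_nonneg (fun i => xhat ω i - xtil ω i)
  have hIbb_le : ∫ ω, dotProduct (fun i => xhat ω i - xtil ω i)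
        (B.mulVec fun i => xhat ω i - xtil ω i) ∂μ
      ≤ m⁻¹ * ∫ ω, ∑ i, (xhat ω i - xtil ω i) ^ 2 ∂μ := by
    have h := integral_mono Ibb (Jb.const_mul m⁻¹) fun ω => inv_quad_le hStilpd hm hml
      (fun i => xhat ω i - xtil ω i)
    rwa [integral_const_mul] at h
  -- the mixed term
  set F : Ω → ℝ := fun ω => Real.sqrt (∑ i, (x ω i - xhat ω i) ^ 2) with hFdef
  set G : Ω → ℝ := fun ω => Real.sqrt (∑ i, (xhat ω i - xtil ω i) ^ 2) with hGdef
  have hsma : Measurable (fun ω => ∑ i, (x ω i - xhat ω i) ^ 2) :=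
    Finset.measurable_sum _ fun i _ =>
      (((measurable_pi_apply i).comp hxm).sub ((measurable_pi_apply i).comp hxhatm)).pow_const 2
  have hsmb : Measurable (fun ω => ∑ i, (xhat ω i - xtil ω i) ^ 2) :=
    Finset.measurable_sum _ fun i _ =>
      (((measurable_pi_apply i).comp hxhatm).sub ((measurable_pi_apply i).comp hxtilm)).pow_const 2
  have hFmeas : Measurable F := hsma.sqrt
  have hGmeas : Measurable G := hsmb.sqrt
  have hsa0 : ∀ ω, (0:ℝ) ≤ ∑ i, (x ω i - xhat ω i) ^ 2 :=
    fun ω => Finset.sum_nonneg fun i _ => sq_nonneg _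
  have hsb0 : ∀ ω, (0:ℝ) ≤ ∑ i, (xhat ω i - xtil ω i) ^ 2 :=
    fun ω => Finset.sum_nonneg fun i _ => sq_nonneg _
  have hF2 : MemLp F 2 μ :=
    (memLp_two_iff_integrable_sq hFmeas.aestronglyMeasurable).mpr
      (Ja.congr (ae_of_all _ fun ω => by rw [hFdef]; exact (Real.sq_sqrt (hsa0 ω)).symm))
  have hG2 : MemLp G 2 μ :=
    (memLp_two_iff_integrable_sq hGmeas.aestronglyMeasurable).mpr
      (Jb.congr (ae_of_all _ fun ω => by rw [hGdef]; exact (Real.sq_sqrt (hsb0 ω)).symm))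
  have hof2 : ENNReal.ofReal (2:ℝ) = 2 := by norm_num
  have hHolder : ∫ ω, F ω * G ω ∂μ ≤
      Real.sqrt (∫ ω, ∑ i, (x ω i - xhat ω i) ^ 2 ∂μ) *
      Real.sqrt (∫ ω, ∑ i, (xhat ω i - xtil ω i) ^ 2 ∂μ) := by
    have hconj : Real.HolderConjugate 2 2 := Real.HolderConjugate.two_two
    have h := integral_mul_le_Lp_mul_Lq_of_nonneg hconj
      (ae_of_all _ fun ω => Real.sqrt_nonneg _) (ae_of_all _ fun ω => Real.sqrt_nonneg _)
      (hof2 ▸ hF2) (hof2 ▸ hG2)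
    have hrw : ∀ (y : ℝ), y ^ (2:ℝ) = y ^ (2:ℕ) := fun y => by
      rw [show (2:ℝ) = ((2:ℕ):ℝ) by norm_num, Real.rpow_natCast]
    have ha : ∫ ω, F ω ^ (2:ℝ) ∂μ = ∫ ω, ∑ i, (x ω i - xhat ω i) ^ 2 ∂μ :=
      integral_congr_ae (ae_of_all _ fun ω => by
        show F ω ^ (2:ℝ) = ∑ i, (x ω i - xhat ω i) ^ 2
        rw [hrw (F ω)]; exact Real.sq_sqrt (hsa0 ω))
    have hb : ∫ ω, G ω ^ (2:ℝ) ∂μ = ∫ ω, ∑ i, (xhat ω i - xtil ω i) ^ 2 ∂μ :=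
      integral_congr_ae (ae_of_all _ fun ω => by
        show G ω ^ (2:ℝ) = ∑ i, (xhat ω i - xtil ω i) ^ 2
        rw [hrw (G ω)]; exact Real.sq_sqrt (hsb0 ω))
    rw [ha, hb] at h
    rw [Real.sqrt_eq_rpow, Real.sqrt_eq_rpow]
    exact h
  have hIab_abs : |∫ ω, dotProduct (fun i => x ω i - xhat ω i)
        (B.mulVec fun i => xhat ω i - xtil ω i) ∂μ|
      ≤ m⁻¹ * (Real.sqrt (∫ ω, ∑ i, (x ω i - xhat ω i) ^ 2 ∂μ) *
          Real.sqrt (∫ ω, ∑ i, (xhat ω i - xtil ω i) ^ 2 ∂μ)) := by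
    have h1 : |∫ ω, dotProduct (fun i => x ω i - xhat ω i)
          (B.mulVec fun i => xhat ω i - xtil ω i) ∂μ|
        ≤ ∫ ω, |dotProduct (fun i => x ω i - xhat ω i)
          (B.mulVec fun i => xhat ω i - xtil ω i)| ∂μ := by
      simpa [Real.norm_eq_abs] using norm_integral_le_integral_norm
        (μ := μ) (fun ω => dotProduct (fun i => x ω i - xhat ω i)
          (B.mulVec fun i => xhat ω i - xtil ω i))
    have h2 : ∫ ω, |dotProduct (fun i => x ω i - xhat ω i)
          (B.mulVec fun i => xhat ω i - xtil ω i)| ∂μ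
        ≤ ∫ ω, m⁻¹ * (F ω * G ω) ∂μ := by
      refine integral_mono Iab.abs ((mul_int hF2 hG2).const_mul m⁻¹) fun ω => ?_
      have := inv_bil_le hStilpd hm hml (fun i => x ω i - xhat ω i)
        (fun i => xhat ω i - xtil ω i)
      calc |dotProduct (fun i => x ω i - xhat ω i)
            (B.mulVec fun i => xhat ω i - xtil ω i)|
          ≤ m⁻¹ * Real.sqrt (∑ i, (x ω i - xhat ω i) ^ 2) *
            Real.sqrt (∑ i, (xhat ω i - xtil ω i) ^ 2) := this
        _ = m⁻¹ * (F ω * G ω) := by rw [hFdef, hGdef]; ring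
    have h3 : ∫ ω, m⁻¹ * (F ω * G ω) ∂μ = m⁻¹ * ∫ ω, F ω * G ω ∂μ :=
      integral_const_mul _ _
    have h4 : m⁻¹ * ∫ ω, F ω * G ω ∂μ ≤ m⁻¹ *
        (Real.sqrt (∫ ω, ∑ i, (x ω i - xhat ω i) ^ 2 ∂μ) *
         Real.sqrt (∫ ω, ∑ i, (xhat ω i - xtil ω i) ^ 2 ∂μ)) :=
      mul_le_mul_of_nonneg_left hHolder (inv_nonneg.mpr hm.le)
    calc _ ≤ _ := h1
      _ ≤ _ := h2
      _ = _ := h3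
      _ ≤ _ := h4
  -- final assembly
  have hn0 : (0:ℝ) < (n:ℝ) := by exact_mod_cast hn
  have hkey : 1 - consist μ n x xhat Stil
      = (1 - consist μ n x xtil Stil)
        + (1/(n:ℝ)) * (∫ ω, dotProduct (fun i => xhat ω i - xtil ω i)
            (B.mulVec fun i => xhat ω i - xtil ω i) ∂μ)
        + (2/(n:ℝ)) * (∫ ω, dotProduct (fun i => x ω i - xhat ω i)
            (B.mulVec fun i => xhat ω i - xtil ω i) ∂μ) := by
    have h1 : consist μ n x xhat Stil = (1/(n:ℝ)) * ∫ ω, dotProduct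
        (fun i => x ω i - xhat ω i) (B.mulVec fun i => x ω i - xhat ω i) ∂μ := rfl
    rw [h1, hCtil]; ring
  rw [hcons, hkey]
  set IBB := ∫ ω, dotProduct (fun i => xhat ω i - xtil ω i)
      (B.mulVec fun i => xhat ω i - xtil ω i) ∂μ
  set IAB := ∫ ω, dotProduct (fun i => x ω i - xhat ω i)
      (B.mulVec fun i => xhat ω i - xtil ω i) ∂μ
  set Ct := consist μ n x xtil Stil
  set SA := Real.sqrt (∫ ω, ∑ i, (x ω i - xhat ω i) ^ 2 ∂μ)
  set SB := Real.sqrt (∫ ω, ∑ i, (xhat ω i - xtil ω i) ^ 2 ∂μ)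
  set JB := ∫ ω, ∑ i, (xhat ω i - xtil ω i) ^ 2 ∂μ
  have habs1 : |(1 - Ct) + (1/(n:ℝ)) * IBB + (2/(n:ℝ)) * IAB|
      ≤ |1 - Ct| + (1/(n:ℝ)) * IBB + (2/(n:ℝ)) * |IAB| := by
    have t1 := abs_add_le ((1 - Ct) + (1/(n:ℝ)) * IBB) ((2/(n:ℝ)) * IAB)
    have t2 := abs_add_le (1 - Ct) ((1/(n:ℝ)) * IBB)
    have t3 : |(1/(n:ℝ)) * IBB| = (1/(n:ℝ)) * IBB :=
      abs_of_nonneg (mul_nonneg (by positivity) hIbb0)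
    have t4 : |(2/(n:ℝ)) * IAB| = (2/(n:ℝ)) * |IAB| := by
      rw [abs_mul, abs_of_nonneg (by positivity : (0:ℝ) ≤ 2/(n:ℝ))]
    linarith
  have hb1 : (1/(n:ℝ)) * IBB ≤ (1/((n:ℝ)*m)) * JB := by
    have := mul_le_mul_of_nonneg_left hIbb_le (le_of_lt (by positivity : (0:ℝ) < 1/(n:ℝ)))
    calc (1/(n:ℝ)) * IBB ≤ (1/(n:ℝ)) * (m⁻¹ * JB) := this
      _ = (1/((n:ℝ)*m)) * JB := by
        rw [one_div, one_div, mul_inv]; ring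
  have hb2 : (2/(n:ℝ)) * |IAB| ≤ (2/((n:ℝ)*m)) * SA * SB := by
    have := mul_le_mul_of_nonneg_left hIab_abs (le_of_lt (by positivity : (0:ℝ) < 2/(n:ℝ)))
    calc (2/(n:ℝ)) * |IAB| ≤ (2/(n:ℝ)) * (m⁻¹ * (SA * SB)) := this
      _ = (2/((n:ℝ)*m)) * SA * SB := by
        have hn' : (n:ℝ) ≠ 0 := hn0.ne'
        have hm' : m ≠ 0 := hm.ne'
        field_simp
  linarith
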